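/- For real s < −1 − 1/γ (where γ = (m+√(m²−4))/2, m ≥ 3), the quantity (−s−1)·B_{i+1} − B_i tends to infinity as i → ∞, where B_n = (γ^{2n}−1)/(γ^{n−1}(γ²−1)). -/

import Mathlib

theorem stmt_13 (m : ℕ) (hm : 3 ≤ m) (γ : ℝ)
    (hγ : γ = ((m : ℝ) + Real.sqrt ((m : ℝ)^2 - 4)) / 2)
    (B : ℕ → ℝ)
    (hB : ∀ n : ℕ, B n = (γ ^ (2 * n) - 1) / (γ ^ ((n : ℝ) - 1) * (γ^2 - 1)))
    (s : ℝ) (hs : s < -1 - 1 / γ) :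
    Filter.Tendsto (fun i : ℕ => (-s - 1) * B (i + 1) - B i)
      Filter.atTop Filter.atTop := by
  have hm' : (3:ℝ) ≤ m := by exact_mod_cast hm
  have hγ1 : 1 < γ := by
    rw [hγ]
    have h0 : (0:ℝ) ≤ Real.sqrt ((m:ℝ)^2 - 4) := Real.sqrt_nonneg _
    nlinarith
  have hγ0 : 0 < γ := by linarith
  have hγne : γ ≠ 0 := ne_of_gt hγ0
  have hd : 0 < γ^2 - 1 := by nlinarith
  have hdne : γ^2 - 1 ≠ 0 := ne_of_gt hd
  have hc : 0 < (-s - 1) * γ - 1 := by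
    have h1 : 1/γ < -s - 1 := by linarith
    rw [div_lt_iff₀ hγ0] at h1
    linarith
  have hBn : ∀ n : ℕ, B n = (γ^(n+1) - γ * (γ⁻¹)^n) / (γ^2 - 1) := by
    intro n
    rw [hB n, Real.rpow_sub hγ0, Real.rpow_natCast, Real.rpow_one]
    field_simp
    have hinvn : γ ^ n * γ⁻¹ ^ n = 1 := by rw [← mul_pow, mul_inv_cancel₀ hγne, one_pow]
    linear_combination γ * hinvn
  have key : ∀ i : ℕ, (-s - 1) * B (i+1) - B i
      = (((-s-1)*γ - 1)/(γ^2-1)) * γ^(i+1)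
        + (γ/(γ^2-1)) * ((γ⁻¹)^i - (-s-1) * (γ⁻¹)^(i+1)) := by
    intro i
    rw [hBn, hBn]
    field_simp
    ring
  simp only [key]
  have h1 : Filter.Tendsto (fun i : ℕ => (((-s-1)*γ - 1)/(γ^2-1)) * γ^(i+1))
      Filter.atTop Filter.atTop := by
    apply Filter.Tendsto.const_mul_atTop (by positivity)
    exact (tendsto_pow_atTop_atTop_of_one_lt hγ1).comp (Filter.tendsto_add_atTop_nat 1)
  have hinv : Filter.Tendsto (fun i : ℕ => (γ⁻¹)^i) Filter.atTop (nhds 0) := by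
    apply tendsto_pow_atTop_nhds_zero_of_lt_one
    · positivity
    · rw [inv_lt_one_iff₀]; right; exact hγ1
  have h2 : Filter.Tendsto
      (fun i : ℕ => (γ/(γ^2-1)) * ((γ⁻¹)^i - (-s-1) * (γ⁻¹)^(i+1)))
      Filter.atTop (nhds ((γ/(γ^2-1)) * (0 - (-s-1) * 0))) := by
    apply Filter.Tendsto.const_mul
    apply Filter.Tendsto.sub hinv
    apply Filter.Tendsto.const_mul
    exact hinv.comp (Filter.tendsto_add_atTop_nat 1)
  exact h1.atTop_add h2
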